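/- arXiv:2002.06964 — 2 statements merged into one kernel-verified Lean document; each statement's English description precedes it below -/
import Mathlib

section
/- Let V be a finite set, let B ⊆ 2^V be a nonempty Sperner hypergraph, and let h be a pure Horn function on V with h ≤ Φ_B. Then K(h) = B if and only if for every set A ⊆ V with A ∈ B^* and every v ∈ V∖A such that A → v is an implicate of h, one has v ∉ ∪B^{V∖A}. -/
open scoped Classical

variable {V : Type*} [Fintype V] [DecidableEq V]

/-- A Sperner hypergraph: no hyperedge contains another one. -/
def SpernerFam (𝓑 : Set (Finset V)) : Prop :=
  ∀ B₁ ∈ 𝓑, ∀ B₂ ∈ 𝓑, B₁ ⊆ B₂ → B₁ = B₂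

/-- `T` is a transversal of `𝓑` if it meets every hyperedge. -/
def IsTransversal (𝓑 : Set (Finset V)) (T : Finset V) : Prop :=
  ∀ B ∈ 𝓑, (T ∩ B).Nonempty

/-- `𝓑^d`: the family of inclusion-minimal transversals of `𝓑`. -/
def dualHyp (𝓑 : Set (Finset V)) : Set (Finset V) :=
  {T | IsTransversal 𝓑 T ∧ ∀ T', IsTransversal 𝓑 T' → T' ⊆ T → T' = T}

/-- `𝓑_S`: the subhypergraph of `𝓑` induced by `S`. -/
def inducedHyp (𝓑 : Set (Finset V)) (S : Finset V) : Set (Finset V) :=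
  {B | B ∈ 𝓑 ∧ B ⊆ S}

/-- `𝓑^S`: the family of inclusion-minimal members of `{S ∩ B : B ∈ 𝓑}`,
the projection of `𝓑` to `S`. -/
def projHyp (𝓑 : Set (Finset V)) (S : Finset V) : Set (Finset V) :=
  {C | (∃ B ∈ 𝓑, C = S ∩ B) ∧ ∀ B ∈ 𝓑, S ∩ B ⊆ C → S ∩ B = C}

/-- A Boolean function `h` on `V` is pure Horn if its set of true assignments contains the
all-true assignment and is closed under componentwise AND. -/
def PureHorn (h : (V → Bool) → Bool) : Prop :=
  h (fun _ => true) = true ∧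
  ∀ x y : V → Bool, h x = true → h y = true → h (fun v => x v && y v) = true

/-- The clause `A → v` is an implicate of `h`: every true assignment of `h` that is true on
every element of `A` is also true at `v`. -/
def Implicate (h : (V → Bool) → Bool) (A : Finset V) (v : V) : Prop :=
  ∀ x : V → Bool, h x = true → (∀ a ∈ A, x a = true) → x v = true

/-- `K` is a key of `h` if `K → v` is an implicate of `h` for every `v ∈ V \ K`. -/
def IsKey (h : (V → Bool) → Bool) (K : Finset V) : Prop :=
  ∀ v ∉ K, Implicate h K v

/-- `𝒦(h)`: the family of inclusion-minimal keys of `h`. -/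
def minKeys (h : (V → Bool) → Bool) : Set (Finset V) :=
  {K | IsKey h K ∧ ∀ K', IsKey h K' → K' ⊆ K → K' = K}

/-- `Φ_𝓑`: the pure Horn function whose true assignments are exactly those `x` such that for
every `B ∈ 𝓑` on which `x` is identically true, `x` is identically true on all of `V`. -/
noncomputable def PhiB (𝓑 : Set (Finset V)) : (V → Bool) → Bool :=
  fun x => decide (∀ B ∈ 𝓑, (∀ u ∈ B, x u = true) → ∀ v : V, x v = true)

/-- `S` is an independent set of `𝓑`: its complement is a transversal. -/
def IndepOf (𝓑 : Set (Finset V)) (S : Finset V) : Prop :=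
  IsTransversal 𝓑 (Finset.univ \ S)

section Aux

variable {𝓑 : Set (Finset V)} {h : (V → Bool) → Bool}

lemma implicate_mono {A A' : Finset V} {v : V}
    (hAA : A ⊆ A') (hi : Implicate h A v) : Implicate h A' v :=
  fun x hx hxa => hi x hx fun a ha => hxa a (hAA ha)

lemma isKey_mono {K K' : Finset V} (hKK : K ⊆ K') (hk : IsKey h K) : IsKey h K' :=
  fun v hv => implicate_mono hKK (hk v fun hvK => hv (hKK hvK))

lemma isKey_of_implicate {A : Finset V} {v : V}
    (hi : Implicate h A v) (hk : IsKey h (insert v A)) : IsKey h A := by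
  intro u hu
  by_cases huv : u = v
  · subst huv; exact hi
  · intro x hx hxa
    refine hk u (by simp [huv, hu]) x hx ?_
    intro a ha
    rcases Finset.mem_insert.mp ha with rfl | ha
    · exact hi x hx hxa
    · exact hxa a ha

lemma key_of_mem (hle : ∀ x : V → Bool, h x = true → PhiB 𝓑 x = true)
    {B : Finset V} (hB : B ∈ 𝓑) : IsKey h B := by
  intro v _ x hx hxB
  exact (of_decide_eq_true (hle x hx)) B hB hxB v

lemma indep_iff {A : Finset V} : IndepOf 𝓑 A ↔ ∀ B ∈ 𝓑, ¬ B ⊆ A := by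
  unfold IndepOf IsTransversal
  constructor
  · intro hI B hB hBA
    obtain ⟨x, hx⟩ := hI B hB
    rw [Finset.mem_inter, Finset.mem_sdiff] at hx
    exact hx.1.2 (hBA hx.2)
  · intro hI B hB
    obtain ⟨x, hxB, hxA⟩ := Finset.not_subset.mp (hI B hB)
    exact ⟨x, by simp [Finset.mem_inter, Finset.mem_sdiff, hxB, hxA]⟩

lemma exists_minKey : ∀ K : Finset V, IsKey h K → ∃ K' ∈ minKeys h, K' ⊆ K := by
  intro K
  induction K using Finset.strongInductionOn with
  | _ K ih =>
    intro hk
    by_cases hm : ∀ K', IsKey h K' → K' ⊆ K → K' = K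
    · exact ⟨K, ⟨hk, hm⟩, le_refl _⟩
    · push_neg at hm
      obtain ⟨K', hK'k, hK's, hne⟩ := hm
      obtain ⟨K'', hK'', hsub⟩ := ih K' (hK's.ssubset_of_ne hne) hK'k
      exact ⟨K'', hK'', hsub.trans hK's⟩

lemma minKeys_eq_iff (hSp : SpernerFam 𝓑)
    (hle : ∀ x : V → Bool, h x = true → PhiB 𝓑 x = true) :
    minKeys h = 𝓑 ↔ ∀ K, IsKey h K → ∃ B ∈ 𝓑, B ⊆ K := by
  constructor
  · intro he K hK
    obtain ⟨K', hK', hsub⟩ := exists_minKey K hK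
    exact ⟨K', he ▸ hK', hsub⟩
  · intro hc
    ext K
    constructor
    · rintro ⟨hK, hmin⟩
      obtain ⟨B, hB, hBK⟩ := hc K hK
      exact (hmin B (key_of_mem hle hB) hBK) ▸ hB
    · intro hK
      refine ⟨key_of_mem hle hK, fun K' hK' hsub => ?_⟩
      obtain ⟨B', hB', hB'K'⟩ := hc K' hK'
      have hBK : B' = K := hSp B' hB' K hK (hB'K'.trans hsub)
      exact Finset.Subset.antisymm hsub (hBK ▸ hB'K')

end Aux

/-- For a nonempty Sperner hypergraph `𝓑` and a pure Horn function `h ≤ Φ_𝓑`: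
`𝒦(h) = 𝓑` iff for every implicate `A → v` of `h` with `A ∈ 𝓑^*` we have
`v ∉ ∪ 𝓑^{V∖A}`. -/
theorem stmt3 (𝓑 : Set (Finset V)) (hne : 𝓑.Nonempty) (hSp : SpernerFam 𝓑)
    (h : (V → Bool) → Bool) (hh : PureHorn h)
    (hle : ∀ x : V → Bool, h x = true → PhiB 𝓑 x = true) :
    minKeys h = 𝓑 ↔
      ∀ A : Finset V, IndepOf 𝓑 A → ∀ v ∉ A, Implicate h A v →
        v ∉ ⋃ C ∈ projHyp 𝓑 (Finset.univ \ A), (C : Set V) := by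
  rw [minKeys_eq_iff hSp hle]
  constructor
  · -- every key contains a hyperedge ⟹ condition
    intro hkey A hA v hvA hi hvU
    rw [Set.mem_iUnion₂] at hvU
    obtain ⟨C, hC, hvC⟩ := hvU
    obtain ⟨⟨B₀, hB₀, rfl⟩, hmin⟩ := hC
    set S := Finset.univ \ A with hS
    have hvC' : v ∈ S ∩ B₀ := by exact_mod_cast hvC
    have hkey1 : IsKey h (A ∪ (S ∩ B₀)) := by
      refine isKey_mono ?_ (key_of_mem hle hB₀)
      intro u hu
      by_cases huA : u ∈ A
      · exact Finset.mem_union_left _ huA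
      · exact Finset.mem_union_right _
          (Finset.mem_inter.mpr ⟨Finset.mem_sdiff.mpr ⟨Finset.mem_univ u, huA⟩, hu⟩)
    have hins : insert v (A ∪ (S ∩ B₀).erase v) = A ∪ (S ∩ B₀) := by
      ext u
      simp only [Finset.mem_insert, Finset.mem_union, Finset.mem_erase]
      constructor
      · rintro (rfl | huA | ⟨_, hu⟩)
        · exact Or.inr hvC'
        · exact Or.inl huA
        · exact Or.inr hu
      · rintro (huA | hu)
        · exact Or.inr (Or.inl huA)
        · by_cases huv : u = v
          · exact Or.inl huv
          · exact Or.inr (Or.inr ⟨huv, hu⟩)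
    have hkey2 : IsKey h (A ∪ (S ∩ B₀).erase v) := by
      refine isKey_of_implicate (implicate_mono Finset.subset_union_left hi) ?_
      rw [hins]; exact hkey1
    obtain ⟨B₁, hB₁, hB₁sub⟩ := hkey _ hkey2
    have h1 : S ∩ B₁ ⊆ (S ∩ B₀).erase v := by
      intro u hu
      have huS := (Finset.mem_inter.mp hu).1
      rcases Finset.mem_union.mp (hB₁sub (Finset.mem_inter.mp hu).2) with huA | hue
      · exact absurd (Finset.mem_sdiff.mp huS).2 (not_not.mpr huA)
      · exact hue
    have h2 := hmin B₁ hB₁ (h1.trans (Finset.erase_subset _ _))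
    rw [← h2] at hvC'
    exact (Finset.mem_erase.mp (h1 hvC')).1 rfl
  · -- condition ⟹ every key contains a hyperedge
    intro hcond K hK
    by_contra hno
    push_neg at hno
    have hKind : IndepOf 𝓑 K := indep_iff.mpr hno
    set 𝒜 := Finset.univ.powerset.filter (fun A : Finset V => K ⊆ A ∧ IndepOf 𝓑 A) with h𝒜
    have hKmem : K ∈ 𝒜 := by
      simp [h𝒜, Finset.mem_filter, Finset.mem_powerset, hKind]
    obtain ⟨A, hA𝒜, hAmax⟩ := Finset.exists_max_image 𝒜 Finset.card ⟨K, hKmem⟩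
    rw [h𝒜, Finset.mem_filter] at hA𝒜
    obtain ⟨-, hKA, hAind⟩ := hA𝒜
    -- A ≠ univ : pick v ∉ A
    obtain ⟨B₀, hB₀⟩ := hne
    obtain ⟨v, hvB₀, hvA⟩ := Finset.not_subset.mp (indep_iff.mp hAind B₀ hB₀)
    -- insert v A is not independent
    have hnotind : ¬ IndepOf 𝓑 (insert v A) := by
      intro hind
      have hmem : insert v A ∈ 𝒜 := by
        simp only [h𝒜, Finset.mem_filter, Finset.mem_powerset]
        exact ⟨Finset.subset_univ _, hKA.trans (Finset.subset_insert _ _), hind⟩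
      have := hAmax _ hmem
      have hcard : A.card < (insert v A).card := by
        rw [Finset.card_insert_of_notMem hvA]; omega
      omega
    rw [indep_iff] at hnotind
    push_neg at hnotind
    obtain ⟨B, hB, hBsub⟩ := hnotind
    have hvB : v ∈ B := by
      by_contra hvB
      exact indep_iff.mp hAind B hB fun u hu =>
        (Finset.mem_insert.mp (hBsub hu)).resolve_left (fun huv => hvB (huv ▸ hu))
    set S := Finset.univ \ A with hS
    have hSB : S ∩ B = {v} := by
      apply Finset.Subset.antisymm
      · intro u hu
        rw [Finset.mem_inter, Finset.mem_sdiff] at hu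
        rcases Finset.mem_insert.mp (hBsub hu.2) with rfl | huA
        · exact Finset.mem_singleton_self _
        · exact absurd huA hu.1.2
      · intro u hu
        rw [Finset.mem_singleton] at hu
        subst hu
        exact Finset.mem_inter.mpr ⟨Finset.mem_sdiff.mpr ⟨Finset.mem_univ _, hvA⟩, hvB⟩
    have hproj : ({v} : Finset V) ∈ projHyp 𝓑 S := by
      refine ⟨⟨B, hB, hSB.symm⟩, fun B' hB' hsub => ?_⟩
      rcases Finset.subset_singleton_iff.mp hsub with hemp | heq
      · exact absurd hemp (hAind B' hB').ne_empty
      · exact heq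
    have hvK : v ∉ K := fun hvK => hvA (hKA hvK)
    have himp : Implicate h A v := implicate_mono hKA (hK v hvK)
    exact hcond A hAind v hvA himp
      (Set.mem_iUnion₂.mpr ⟨{v}, hproj, by simp⟩)
end

section
/- Let V be a finite set and let B ⊆ 2^V be a nonempty Sperner hypergraph. Then Φ_B is the unique pure Horn function h with K(h) = B if and only if for every minimal transversal T ∈ B^d and every v ∈ V∖T there exists T' ∈ B^d with T' ≠ T and T' ⊆ T ∪ {v}. -/
open scoped Classical

variable {V : Type*} [Fintype V] [DecidableEq V]

/-- `𝓑` is a unique key hypergraph: `Φ_𝓑` is the unique pure Horn function `h`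
with `𝒦(h) = 𝓑`. -/
def UniqueKeyHypergraph (𝓑 : Set (Finset V)) : Prop :=
  minKeys (PhiB 𝓑) = 𝓑 ∧
  ∀ h : (V → Bool) → Bool, PureHorn h → minKeys h = 𝓑 → h = PhiB 𝓑

/-- indicator of a finset -/
noncomputable def indF (S : Finset V) : V → Bool := fun v => decide (v ∈ S)

lemma indF_eq_true {S : Finset V} {v : V} : indF S v = true ↔ v ∈ S := by
  simp [indF]

lemma exists_minimal_subset (P : Finset V → Prop) (U : Finset V) (hU : P U) :
    ∃ T, T ⊆ U ∧ P T ∧ ∀ T', P T' → T' ⊆ T → T' = T := by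
  classical
  obtain ⟨T, hT, hmin⟩ := Finset.exists_min_image (U.powerset.filter P) Finset.card
    ⟨U, by simp [hU]⟩
  simp only [Finset.mem_filter, Finset.mem_powerset] at hT
  refine ⟨T, hT.1, hT.2, fun T' hP hsub => Finset.eq_of_subset_of_card_le hsub ?_⟩
  have hmem : T' ∈ U.powerset.filter P := by
    simp [Finset.mem_filter, Finset.mem_powerset, hP, hsub.trans hT.1]
  exact hmin T' hmem

lemma exists_dual_subset {𝓑 : Set (Finset V)} {U : Finset V} (hU : IsTransversal 𝓑 U) :
    ∃ T ∈ dualHyp 𝓑, T ⊆ U := by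
  obtain ⟨T, hTU, hP, hmin⟩ := exists_minimal_subset (IsTransversal 𝓑) U hU
  exact ⟨T, ⟨hP, hmin⟩, hTU⟩

lemma phiB_eq_true_iff {𝓑 : Set (Finset V)} {x : V → Bool} :
    PhiB 𝓑 x = true ↔ ∀ B ∈ 𝓑, (∀ u ∈ B, x u = true) → ∀ v : V, x v = true :=
  decide_eq_true_iff

/-- keys of a function with `minKeys h = 𝓑` contain a member of `𝓑`. -/
lemma key_contains_mem {𝓑 : Set (Finset V)} {h : (V → Bool) → Bool}
    (hh : minKeys h = 𝓑) {K : Finset V} (hK : IsKey h K) : ∃ B ∈ 𝓑, B ⊆ K := by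
  obtain ⟨T, hTK, hP, hmin⟩ := exists_minimal_subset (IsKey h) K hK
  exact ⟨T, hh ▸ ⟨hP, hmin⟩, hTK⟩

lemma mem_isKey {𝓑 : Set (Finset V)} {h : (V → Bool) → Bool}
    (hh : minKeys h = 𝓑) {B K : Finset V} (hB : B ∈ 𝓑) (hBK : B ⊆ K) : IsKey h K := by
  have hkey : IsKey h B := (hh ▸ hB : B ∈ minKeys h).1
  intro v hv x hx hxK
  exact hkey v (fun hvB => hv (hBK hvB)) x hx (fun a ha => hxK a (hBK ha))

lemma minKeys_eq_of_key_iff {𝓑 : Set (Finset V)} (hSp : SpernerFam 𝓑)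
    {h : (V → Bool) → Bool} (hkey : ∀ K, IsKey h K ↔ ∃ B ∈ 𝓑, B ⊆ K) :
    minKeys h = 𝓑 := by
  ext K
  constructor
  · rintro ⟨hK, hminK⟩
    obtain ⟨B, hB, hBK⟩ := (hkey K).1 hK
    have : B = K := hminK B ((hkey B).2 ⟨B, hB, subset_rfl⟩) hBK
    exact this ▸ hB
  · intro hK
    refine ⟨(hkey K).2 ⟨K, hK, subset_rfl⟩, fun K' hK' hsub => ?_⟩
    obtain ⟨B, hB, hBK'⟩ := (hkey K').1 hK'
    have hBK : B = K := hSp B hB K hK (hBK'.trans hsub)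
    exact subset_antisymm hsub (hBK ▸ hBK')

lemma isKey_phiB_iff {𝓑 : Set (Finset V)} (hne : 𝓑.Nonempty) (K : Finset V) :
    IsKey (PhiB 𝓑) K ↔ ∃ B ∈ 𝓑, B ⊆ K := by
  constructor
  · intro hK
    by_contra hcon
    push_neg at hcon
    -- K ≠ univ
    have hKne : K ≠ Finset.univ := by
      rintro rfl
      obtain ⟨B, hB⟩ := hne
      exact hcon B hB (Finset.subset_univ B)
    obtain ⟨v, hv⟩ : ∃ v, v ∉ K := by
      by_contra hall; push_neg at hall
      exact hKne (Finset.eq_univ_iff_forall.2 hall)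
    have htrue : PhiB 𝓑 (indF K) = true := by
      rw [phiB_eq_true_iff]
      intro B hB hBx
      exact absurd (fun u hu => indF_eq_true.1 (hBx u hu)) (hcon B hB)
    have := hK v hv (indF K) htrue (fun a ha => indF_eq_true.2 ha)
    rw [indF_eq_true] at this
    exact hv this
  · intro ⟨B, hB, hBK⟩ v hv x hx hxK
    rw [phiB_eq_true_iff] at hx
    exact hx B hB (fun u hu => hxK u (hBK hu)) v

lemma minKeys_phiB {𝓑 : Set (Finset V)} (hne : 𝓑.Nonempty) (hSp : SpernerFam 𝓑) :
    minKeys (PhiB 𝓑) = 𝓑 :=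
  minKeys_eq_of_key_iff hSp (isKey_phiB_iff hne)

/-- any true point of a function with the right keys is a true point of `Φ`. -/
lemma le_phiB {𝓑 : Set (Finset V)} {h : (V → Bool) → Bool}
    (hh : minKeys h = 𝓑) (x : V → Bool) (hx : h x = true) : PhiB 𝓑 x = true := by
  rw [phiB_eq_true_iff]
  intro B hB hBx v
  by_cases hv : v ∈ B
  · exact hBx v hv
  · exact (hh ▸ hB : B ∈ minKeys h).1 v hv x hx hBx

lemma eq_indF_of_mem_iff {S : Finset V} {x : V → Bool} (h : ∀ u, u ∈ S ↔ x u = true) :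
    x = indF S := by
  funext u
  by_cases hu : u ∈ S
  · rw [(h u).1 hu]; simp [indF, hu]
  · have hf : x u = false := by
      cases hxu : x u
      · rfl
      · exact absurd ((h u).2 hxu) hu
    rw [hf]; simp [indF, hu]

/-- the complement of each minimal transversal is a true point of any `h` with the right keys. -/
lemma compl_dual_true {𝓑 : Set (Finset V)} {h : (V → Bool) → Bool}
    (hh : minKeys h = 𝓑) {T : Finset V} (hT : T ∈ dualHyp 𝓑) :
    h (indF Tᶜ) = true := by
  -- Tᶜ is not a key of h
  have hnk : ¬ IsKey h Tᶜ := by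
    intro hk
    obtain ⟨B, hB, hBT⟩ := key_contains_mem hh hk
    obtain ⟨u, hu⟩ := hT.1 B hB
    rw [Finset.mem_inter] at hu
    exact (Finset.mem_compl.1 (hBT hu.2)) hu.1
  rw [IsKey] at hnk
  push_neg at hnk
  obtain ⟨v, hv, hnimp⟩ := hnk
  rw [Implicate] at hnimp
  push_neg at hnimp
  obtain ⟨x, hx, hxT, hxv⟩ := hnimp
  -- the support of x contains no member of 𝓑
  have hnoB : ∀ B ∈ 𝓑, ¬ (∀ u ∈ B, x u = true) := by
    intro B hB hBx
    have hvB : v ∉ B := fun hvB => hxv (hBx v hvB)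
    exact hxv ((hh ▸ hB : B ∈ minKeys h).1 v hvB x hx hBx)
  -- the complement of the support of x is a transversal contained in T
  set S : Finset V := Finset.univ.filter (fun u => x u = true) with hS
  have hmemS : ∀ u, u ∈ S ↔ x u = true := by intro u; simp [hS]
  have hStrans : IsTransversal 𝓑 Sᶜ := by
    intro B hB
    by_contra hempty
    rw [Finset.not_nonempty_iff_eq_empty] at hempty
    refine hnoB B hB (fun u hu => (hmemS u).1 ?_)
    by_contra huS
    have : u ∈ Sᶜ ∩ B := Finset.mem_inter.2 ⟨Finset.mem_compl.2 huS, hu⟩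
    simp [hempty] at this
  have hsub : Sᶜ ⊆ T := by
    intro u hu
    rw [Finset.mem_compl] at hu
    by_contra huT
    exact hu ((hmemS u).2 (hxT u (Finset.mem_compl.2 huT)))
  have hSeq : Sᶜ = T := hT.2 Sᶜ hStrans hsub
  have hxind : x = indF Tᶜ :=
    eq_indF_of_mem_iff (fun u => by rw [← hSeq, compl_compl]; exact hmemS u)
  exact hxind ▸ hx

lemma transversal_mono {𝓑 : Set (Finset V)} {U U' : Finset V} (hsub : U ⊆ U')
    (hU : IsTransversal 𝓑 U) : IsTransversal 𝓑 U' := fun B hB =>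
  (hU B hB).mono (Finset.inter_subset_inter hsub subset_rfl)

/-- the key lemma for sufficiency: every true point of `Φ` is a true point of `h`. -/
lemma phiB_le {𝓑 : Set (Finset V)}
    (hRHS : ∀ T ∈ dualHyp 𝓑, ∀ v ∉ T, ∃ T' ∈ dualHyp 𝓑, T' ≠ T ∧ T' ⊆ T ∪ {v})
    {h : (V → Bool) → Bool} (hPH : PureHorn h) (hh : minKeys h = 𝓑)
    (x : V → Bool) (hx : PhiB 𝓑 x = true) : h x = true := by
  set S : Finset V := Finset.univ.filter (fun u => x u = true) with hS
  have hmemS : ∀ u, u ∈ S ↔ x u = true := by intro u; simp [hS]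
  have hxind : x = indF S := eq_indF_of_mem_iff hmemS
  by_cases huniv : S = Finset.univ
  · have : x = fun _ => true := by
      funext u
      exact (hmemS u).1 (huniv ▸ Finset.mem_univ u)
    rw [this]; exact hPH.1
  -- no member of 𝓑 is contained in S
  have hnoB : ∀ B ∈ 𝓑, ¬ B ⊆ S := by
    intro B hB hBS
    refine huniv (Finset.eq_univ_iff_forall.2 fun v => (hmemS v).2 ?_)
    exact phiB_eq_true_iff.1 hx B hB (fun u hu => (hmemS u).1 (hBS hu)) v
  have hStrans : IsTransversal 𝓑 Sᶜ := by
    intro B hB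
    by_contra hempty
    rw [Finset.not_nonempty_iff_eq_empty] at hempty
    refine hnoB B hB (fun u hu => ?_)
    by_contra huS
    have : u ∈ Sᶜ ∩ B := Finset.mem_inter.2 ⟨Finset.mem_compl.2 huS, hu⟩
    simp [hempty] at this
  -- main induction
  have main : ∀ n (W : Finset V), (W \ S).card ≤ n → S ⊆ W → IsTransversal 𝓑 Wᶜ →
      h (indF W) = true → h (indF S) = true := by
    intro n
    induction n with
    | zero =>
      intro W hcard hSW _ hW
      have : W \ S = ∅ := Finset.card_eq_zero.1 (Nat.le_zero.1 hcard)
      have hWS : W = S := subset_antisymm (fun u hu => by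
        by_contra huS
        exact absurd (Finset.mem_sdiff.2 ⟨hu, huS⟩) (by simp [this])) hSW
      exact hWS ▸ hW
    | succ n ih =>
      intro W hcard hSW hWtrans hW
      by_cases hWS : W = S
      · exact hWS ▸ hW
      have hne' : (W \ S).Nonempty := by
        rw [Finset.sdiff_nonempty]
        exact fun hsub => hWS (subset_antisymm hsub hSW)
      obtain ⟨v, hv⟩ := hne'
      rw [Finset.mem_sdiff] at hv
      obtain ⟨T, hT, hTsub⟩ := exists_dual_subset hWtrans
      have hvT : v ∉ T := fun hvT => (Finset.mem_compl.1 (hTsub hvT)) hv.1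
      obtain ⟨T', hT', hTne, hT'sub⟩ := hRHS T hT v hvT
      have hvT' : v ∈ T' := by
        by_contra hvT'
        refine hTne (hT.2 T' hT'.1 (fun u hu => ?_))
        rcases Finset.mem_union.1 (hT'sub hu) with h1 | h1
        · exact h1
        · exact absurd (Finset.mem_singleton.1 h1 ▸ hu) hvT'
      have hhT' : h (indF T'ᶜ) = true := compl_dual_true hh hT'
      have hand := hPH.2 _ _ hW hhT'
      have heq : (fun u => indF W u && indF T'ᶜ u) = indF (W ∩ T'ᶜ) := by
        funext u
        simp [indF, Finset.mem_inter]
      rw [heq] at hand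
      refine ih (W ∩ T'ᶜ) ?_ ?_ ?_ hand
      · -- card
        have hss : (W ∩ T'ᶜ) \ S ⊂ W \ S := by
          constructor
          · exact Finset.sdiff_subset_sdiff Finset.inter_subset_left subset_rfl
          · intro hsub'
            have : v ∈ (W ∩ T'ᶜ) \ S := hsub' (Finset.mem_sdiff.2 hv)
            rw [Finset.mem_sdiff, Finset.mem_inter, Finset.mem_compl] at this
            exact this.1.2 hvT'
        have := Finset.card_lt_card hss
        omega
      · -- S ⊆ W ∩ T'ᶜ
        intro u hu
        rw [Finset.mem_inter, Finset.mem_compl]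
        refine ⟨hSW hu, fun huT' => ?_⟩
        rcases Finset.mem_union.1 (hT'sub huT') with h1 | h1
        · exact Finset.mem_compl.1 (hTsub h1) (hSW hu)
        · rw [Finset.mem_singleton] at h1
          exact hv.2 (h1 ▸ hu)
      · -- transversal
        refine transversal_mono ?_ hWtrans
        rw [Finset.compl_inter]
        exact Finset.subset_union_left
  obtain ⟨T, hT, hTsub⟩ := exists_dual_subset hStrans
  have hSTc : S ⊆ Tᶜ := fun u hu => Finset.mem_compl.2 (fun huT =>
    Finset.mem_compl.1 (hTsub huT) hu)
  have := main (Tᶜ \ S).card Tᶜ le_rfl hSTc (by rw [compl_compl]; exact hT.1)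
    (compl_dual_true hh hT)
  rw [hxind]; exact this

/-- the smallest pure Horn function with key family generated by `𝓑`:
true points are the all-true assignment and the complements of unions of
nonempty families of minimal transversals. -/
noncomputable def hAux (𝓑 : Set (Finset V)) : (V → Bool) → Bool :=
  fun x => decide (x = (fun _ => true) ∨
    ∃ 𝒯 : Finset (Finset V), 𝒯.Nonempty ∧ (∀ T ∈ 𝒯, T ∈ dualHyp 𝓑) ∧
      x = indF ((𝒯.sup id)ᶜ))

lemma hAux_eq_true_iff {𝓑 : Set (Finset V)} {x : V → Bool} :
    hAux 𝓑 x = true ↔ (x = (fun _ => true) ∨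
      ∃ 𝒯 : Finset (Finset V), 𝒯.Nonempty ∧ (∀ T ∈ 𝒯, T ∈ dualHyp 𝓑) ∧
        x = indF ((𝒯.sup id)ᶜ)) := decide_eq_true_iff

lemma pureHorn_hAux (𝓑 : Set (Finset V)) : PureHorn (hAux 𝓑) := by
  constructor
  · rw [hAux_eq_true_iff]; exact Or.inl rfl
  · intro x y hx hy
    rw [hAux_eq_true_iff] at hx hy ⊢
    rcases hx with hx | ⟨𝒯x, hne_x, hdx, hxeq⟩
    · rcases hy with hy | ⟨𝒯y, hne_y, hdy, hyeq⟩
      · left; funext v; rw [hx, hy]; rfl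
      · right
        exact ⟨𝒯y, hne_y, hdy, by funext v; rw [hx, hyeq]; simp⟩
    · rcases hy with hy | ⟨𝒯y, hne_y, hdy, hyeq⟩
      · right
        exact ⟨𝒯x, hne_x, hdx, by funext v; rw [hy, hxeq]; simp⟩
      · right
        refine ⟨𝒯x ∪ 𝒯y, hne_x.mono Finset.subset_union_left, ?_, ?_⟩
        · intro T hT
          rcases Finset.mem_union.1 hT with h1 | h1
          · exact hdx T h1
          · exact hdy T h1
        · funext v
          rw [hxeq, hyeq]
          simp [indF, Finset.sup_union, Finset.mem_union, not_or]

lemma isKey_hAux_iff {𝓑 : Set (Finset V)} (hne : 𝓑.Nonempty) (K : Finset V) :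
    IsKey (hAux 𝓑) K ↔ ∃ B ∈ 𝓑, B ⊆ K := by
  constructor
  · intro hK
    by_contra hcon
    push_neg at hcon
    have hKtrans : IsTransversal 𝓑 Kᶜ := by
      intro B hB
      by_contra hempty
      rw [Finset.not_nonempty_iff_eq_empty] at hempty
      refine hcon B hB (fun u hu => ?_)
      by_contra huK
      have : u ∈ Kᶜ ∩ B := Finset.mem_inter.2 ⟨Finset.mem_compl.2 huK, hu⟩
      simp [hempty] at this
    obtain ⟨T, hT, hTsub⟩ := exists_dual_subset hKtrans
    obtain ⟨B₀, hB₀⟩ := hne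
    obtain ⟨v, hv⟩ := hT.1 B₀ hB₀
    rw [Finset.mem_inter] at hv
    have hvK : v ∉ K := Finset.mem_compl.1 (hTsub hv.1)
    have htrue : hAux 𝓑 (indF Tᶜ) = true := by
      rw [hAux_eq_true_iff]
      right
      exact ⟨{T}, Finset.singleton_nonempty T, by simpa using hT, by simp⟩
    have := hK v hvK (indF Tᶜ) htrue (fun a ha => indF_eq_true.2
      (Finset.mem_compl.2 (fun haT => Finset.mem_compl.1 (hTsub haT) ha)))
    rw [indF_eq_true, Finset.mem_compl] at this
    exact this hv.1
  · intro ⟨B, hB, hBK⟩ v hv x hx hxK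
    rw [hAux_eq_true_iff] at hx
    rcases hx with hx | ⟨𝒯, hne𝒯, hd, hxeq⟩
    · rw [hx]
    · exfalso
      obtain ⟨T, hT⟩ := hne𝒯
      obtain ⟨u, hu⟩ := (hd T hT).1 B hB
      rw [Finset.mem_inter] at hu
      have : x u = true := hxK u (hBK hu.2)
      rw [hxeq, indF_eq_true, Finset.mem_compl] at this
      exact this (Finset.le_sup (f := id) hT hu.1)

lemma minKeys_hAux {𝓑 : Set (Finset V)} (hne : 𝓑.Nonempty) (hSp : SpernerFam 𝓑) :
    minKeys (hAux 𝓑) = 𝓑 :=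
  minKeys_eq_of_key_iff hSp (isKey_hAux_iff hne)

lemma indF_injective {S S' : Finset V} (h : indF S = indF (V := V) S') : S = S' := by
  ext u
  have := congrFun h u
  simp only [indF, decide_eq_decide] at this
  exact this

/-- For a nonempty Sperner hypergraph `𝓑`, the pure Horn function `Φ_𝓑` is the unique one
with `𝒦(h) = 𝓑` iff for every minimal transversal `T ∈ 𝓑^d` and every `v ∉ T` there is
`T' ∈ 𝓑^d` with `T' ≠ T` and `T' ⊆ T ∪ {v}`. -/
theorem stmt5 (𝓑 : Set (Finset V)) (hne : 𝓑.Nonempty) (hSp : SpernerFam 𝓑) :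
    UniqueKeyHypergraph 𝓑 ↔
      ∀ T ∈ dualHyp 𝓑, ∀ v ∉ T, ∃ T' ∈ dualHyp 𝓑, T' ≠ T ∧ T' ⊆ T ∪ {v} := by
  constructor
  · rintro ⟨-, h2⟩ T hT v hv
    by_contra hcon
    push_neg at hcon
    have heq := h2 (hAux 𝓑) (pureHorn_hAux 𝓑) (minKeys_hAux hne hSp)
    -- evaluate at the indicator of (T ∪ {v})ᶜ
    set x₀ : V → Bool := indF ((T ∪ {v})ᶜ) with hx₀
    have hphi : PhiB 𝓑 x₀ = true := by
      rw [phiB_eq_true_iff]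
      intro B hB hBx w
      exfalso
      obtain ⟨u, hu⟩ := hT.1 B hB
      rw [Finset.mem_inter] at hu
      have := hBx u hu.2
      rw [hx₀, indF_eq_true, Finset.mem_compl, Finset.mem_union] at this
      exact this (Or.inl hu.1)
    have hAuxF : hAux 𝓑 x₀ ≠ true := by
      intro habs0
      rw [hAux_eq_true_iff] at habs0
      rcases habs0 with habs | ⟨𝒯, hne𝒯, hd, habs⟩
      · have := congrFun habs v
        rw [hx₀] at this
        simp [indF] at this
      · have hSeq : (T ∪ {v})ᶜ = (𝒯.sup id)ᶜ := indF_injective (hx₀ ▸ habs)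
        have hsup : 𝒯.sup id = T ∪ {v} := by
          have := congrArg (fun s => sᶜ) hSeq
          simpa only [compl_compl] using this.symm
        have hallT : ∀ T' ∈ 𝒯, T' = T := by
          intro T' hT'
          by_contra hT'ne
          exact hcon T' (hd T' hT') hT'ne (hsup ▸ Finset.le_sup (f := id) hT')
        have hvsup : v ∈ 𝒯.sup id := by
          rw [hsup]; simp
        obtain ⟨T', hT', hvT'⟩ := Finset.mem_sup.1 hvsup
        rw [hallT T' hT'] at hvT'
        exact hv hvT'
    rw [heq] at hAuxF
    exact hAuxF hphi
  · intro hRHS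
    refine ⟨minKeys_phiB hne hSp, fun h hPH hk => ?_⟩
    funext x
    have h1 : h x = true → PhiB 𝓑 x = true := le_phiB hk x
    have h2 : PhiB 𝓑 x = true → h x = true := phiB_le hRHS hPH hk x
    cases hx : h x <;> cases hp : PhiB 𝓑 x
    · rfl
    · exact absurd (h2 hp) (by simp [hx])
    · exact absurd (h1 hx) (by simp [hp])
    · rfl
end
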